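/- Let X be a separable metrizable space such that the set S(X) of non-isolated points of X is compact. Then the hyperspace CL(X) with the Vietoris topology is a γ-space: there is a function g : ℕ × CL(X) → (opens of CL(X)) such that (i) {g(n, A) : n ∈ ℕ} is a neighborhood base at A for each A ∈ CL(X), and (ii) for each n and A there is m with: B ∈ g(m, A) implies g(m, B) ⊆ g(n, A). -/

import Mathlib

open Set TopologicalSpace

/-- The hyperspace of nonempty closed subsets of `X`. -/
def CL (X : Type*) [TopologicalSpace X] : Type _ :=
  {A : Set X // A.Nonempty ∧ IsClosed A}

/-- The Vietoris topology on `CL X`. -/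
instance CL.instTopologicalSpace (X : Type*) [TopologicalSpace X] :
    TopologicalSpace (CL X) :=
  .generateFrom
    ({S | ∃ U : Set X, IsOpen U ∧ S = {K : CL X | K.1 ⊆ U}} ∪
     {S | ∃ U : Set X, IsOpen U ∧ S = {K : CL X | (K.1 ∩ U).Nonempty}})

lemma exists_goodD (X : Type*) [TopologicalSpace X] [SeparableSpace X] [MetrizableSpace X]
    [Nonempty X] :
    ∃ D : X → X → ℝ,
      (∀ x, D x x = 0) ∧ (∀ x y, 0 ≤ D x y) ∧ (∀ x y, D x y = D y x) ∧
      (∀ x y z, D x z ≤ D x y + D y z) ∧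
      (∀ a, Continuous (D a)) ∧
      (∀ x U, IsOpen U → x ∈ U → ∃ ρ > 0, ∀ y, D x y < ρ → y ∈ U) ∧
      (∀ (A : Set X) (ε : ℝ), 0 < ε → A.Nonempty →
        ∃ F : Finset X, ↑F ⊆ A ∧ ∀ x ∈ A, ∃ a ∈ F, D a x < ε) := by
  classical
  letI : MetricSpace X := TopologicalSpace.metrizableSpaceMetric X
  obtain ⟨u, hu⟩ := TopologicalSpace.exists_dense_seq X
  set m : X → ℕ → ℝ := fun x k => min (dist x (u k)) 1 with hm
  have hm0 : ∀ x k, 0 ≤ m x k := fun x k => le_min dist_nonneg zero_le_one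
  have hm1 : ∀ x k, m x k ≤ 1 := fun x k => min_le_right _ _
  have habs : ∀ x y k, |m x k - m y k| ≤ 1 := by
    intro x y k
    rw [abs_le]
    constructor <;> nlinarith [hm0 x k, hm1 x k, hm0 y k, hm1 y k]
  set f : X → X → ℕ → ℝ := fun x y k => |m x k - m y k| * (1 / 2) ^ k with hf
  have hfnn : ∀ x y k, 0 ≤ f x y k := fun x y k => by positivity
  have hfle : ∀ x y k, f x y k ≤ (1 / 2) ^ k := by
    intro x y k
    calc |m x k - m y k| * (1/2)^k ≤ 1 * (1/2)^k := by
          apply mul_le_mul_of_nonneg_right (habs x y k) (by positivity)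
      _ = (1/2)^k := one_mul _
  have hsum : ∀ x y, Summable (f x y) :=
    fun x y => Summable.of_nonneg_of_le (hfnn x y) (hfle x y) summable_geometric_two
  set D : X → X → ℝ := fun x y => ∑' k, f x y k with hD
  have hDself : ∀ x, D x x = 0 := by
    intro x; simp [hD, hf]
  have hDnn : ∀ x y, 0 ≤ D x y := fun x y => tsum_nonneg (hfnn x y)
  have hDcomm : ∀ x y, D x y = D y x := by
    intro x y
    simp only [hD, hf]
    congr 1; ext k; rw [abs_sub_comm]
  have hDtri : ∀ x y z, D x z ≤ D x y + D y z := by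
    intro x y z
    have h1 : ∀ k, f x z k ≤ f x y k + f y z k := by
      intro k
      simp only [hf, ← add_mul]
      apply mul_le_mul_of_nonneg_right (abs_sub_le _ _ _) (by positivity)
    calc D x z ≤ ∑' k, (f x y k + f y z k) :=
          (hsum x z).tsum_le_tsum h1 ((hsum x y).add (hsum y z))
      _ = D x y + D y z := (hsum x y).tsum_add (hsum y z)
  have hDcont : ∀ a, Continuous (D a) := by
    intro a
    apply continuous_tsum (u := fun k => (1/2 : ℝ)^k)
    · intro k
      have : Continuous fun y => m y k := (continuous_id.dist continuous_const).min continuous_const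
      exact ((continuous_const.sub this).abs).mul continuous_const
    · exact summable_geometric_two
    · intro k y
      rw [Real.norm_eq_abs, abs_of_nonneg (hfnn a y k)]
      exact hfle a y k
  have hterm_le : ∀ x y k, f x y k ≤ D x y := by
    intro x y k
    exact (hsum x y).le_tsum k (fun j _ => hfnn x y j)
  have hcompat : ∀ x U, IsOpen U → x ∈ U → ∃ ρ > 0, ∀ y, D x y < ρ → y ∈ U := by
    intro x U hU hxU
    rcases Metric.isOpen_iff.1 hU x hxU with ⟨η₀, hη₀, hball⟩
    set η := min η₀ 1 with hη
    have hηpos : 0 < η := lt_min hη₀ one_pos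
    have hη1 : η ≤ 1 := min_le_right _ _
    obtain ⟨k, hk⟩ := hu.exists_dist_lt x (show (0:ℝ) < η/3 by linarith)
    refine ⟨(η/3) * (1/2)^k, by positivity, fun y hy => ?_⟩
    have h1 : f x y k < (η/3) * (1/2)^k := lt_of_le_of_lt (hterm_le x y k) hy
    have h2 : |m x k - m y k| < η/3 := by
      have hp : (0:ℝ) < (1/2)^k := by positivity
      simpa [hf] using (mul_lt_mul_iff_of_pos_right hp).1 h1
    have hmx : m x k = dist x (u k) := min_eq_left (by linarith [hk])
    have hmy : m y k < 2*η/3 := by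
      have := abs_lt.1 h2
      simp only [hmx] at this ⊢
      linarith
    have hdy : dist y (u k) < 2*η/3 := by
      by_contra h
      push_neg at h
      have : min (dist y (u k)) 1 = m y k := rfl
      rcases min_cases (dist y (u k)) 1 with ⟨he, _⟩ | ⟨he, _⟩
      · rw [hm] at hmy; simp only at hmy; rw [he] at hmy; linarith
      · rw [hm] at hmy; simp only at hmy; rw [he] at hmy; linarith
    apply hball
    have : dist x y < η := by
      calc dist x y ≤ dist x (u k) + dist (u k) y := dist_triangle _ _ _
        _ = dist x (u k) + dist y (u k) := by rw [dist_comm (u k) y]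
        _ < η/3 + 2*η/3 := by linarith
        _ = η := by ring
    exact Metric.mem_ball'.2 (by simpa [dist_comm] using lt_of_lt_of_le this (min_le_left _ _))
  refine ⟨D, hDself, hDnn, hDcomm, hDtri, hDcont, hcompat, ?_⟩
  intro A ε hε hA
  have half : ∃ G : Finset X, ∀ x : X, ∃ g ∈ G, D g x < ε / 2 := by
    obtain ⟨K, hK⟩ := exists_pow_lt_of_lt_one (show (0:ℝ) < ε/8 by linarith)
      (show (1:ℝ)/2 < 1 by norm_num)
    obtain ⟨M, hM⟩ := exists_nat_gt (8/ε)
    have hMpos : (0:ℝ) < M := lt_trans (by positivity) hM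
    have hMinv : 1 / (M:ℝ) < ε/8 := by
      rw [div_lt_div_iff₀ hMpos (by norm_num : (0:ℝ) < 8)]
      have h8 : 8 < M * ε := by
        have := (div_lt_iff₀ hε).1 hM
        linarith
      linarith
    have hfloor : ∀ (x : X) (k : ℕ), ⌊m x k * M⌋₊ < M + 1 := by
      intro x k
      have h1 : m x k * M ≤ M := by nlinarith [hm1 x k, hm0 x k]
      have := Nat.floor_mono h1
      rw [Nat.floor_natCast] at this
      omega
    set Φ : X → (Fin K → Fin (M+1)) := fun x k => ⟨⌊m x (k:ℕ) * M⌋₊, hfloor x k⟩ with hΦ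
    have key : ∀ g x : X, Φ g = Φ x → D g x < ε / 2 := by
      intro g x hgx
      have hfl : ∀ k : ℕ, k < K → |m g k - m x k| ≤ 1 / M := by
        intro k hk
        have h1 : (⌊m g k * M⌋₊ : ℝ) = (⌊m x k * M⌋₊ : ℝ) := by
          have := congrArg Fin.val (congrFun hgx ⟨k, hk⟩)
          simp only [hΦ] at this
          exact_mod_cast this
        have ha1 := Nat.floor_le (mul_nonneg (hm0 g k) hMpos.le)
        have ha2 := Nat.lt_floor_add_one (m g k * M)
        have hb1 := Nat.floor_le (mul_nonneg (hm0 x k) hMpos.le)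
        have hb2 := Nat.lt_floor_add_one (m x k * M)
        have habs : |(m g k - m x k) * M| ≤ 1 := by
          rw [abs_le]; constructor <;> nlinarith
        rw [abs_mul, abs_of_pos hMpos] at habs
        rw [le_div_iff₀ hMpos]
        exact habs
      have hhead : ∑ k ∈ Finset.range K, f g x k < ε / 4 := by
        have h1 : ∑ k ∈ Finset.range K, f g x k ≤ ∑ k ∈ Finset.range K, (1/(M:ℝ)) * (1/2)^k := by
          apply Finset.sum_le_sum
          intro k hk
          rw [hf]
          exact mul_le_mul_of_nonneg_right (hfl k (Finset.mem_range.1 hk)) (by positivity)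
        have h2 : ∑ k ∈ Finset.range K, (1/(M:ℝ)) * (1/2)^k
            = (1/(M:ℝ)) * ∑ k ∈ Finset.range K, (1/2:ℝ)^k := by rw [Finset.mul_sum]
        have h3 : ∑ k ∈ Finset.range K, (1/2:ℝ)^k ≤ 2 := by
          have := summable_geometric_two.sum_le_tsum (Finset.range K) (fun i _ => by positivity : ∀ i ∉ Finset.range K, (0:ℝ) ≤ (1/2)^i)
          rwa [tsum_geometric_two] at this
        calc ∑ k ∈ Finset.range K, f g x k ≤ (1/(M:ℝ)) * ∑ k ∈ Finset.range K, (1/2:ℝ)^k := by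
              rw [← h2]; exact h1
          _ ≤ (1/(M:ℝ)) * 2 := by
              apply mul_le_mul_of_nonneg_left h3 (by positivity)
          _ < ε / 4 := by nlinarith
      have htail : ∑' (k : ↑(↑(Finset.range K) : Set ℕ)ᶜ), f g x k ≤ ε / 4 := by
        have hsub1 : Summable fun k : ↑(↑(Finset.range K) : Set ℕ)ᶜ => f g x (k : ℕ) :=
          (hsum g x).subtype _
        have hsub2 : Summable fun k : ↑(↑(Finset.range K) : Set ℕ)ᶜ => ((1:ℝ)/2)^(k:ℕ) :=
          summable_geometric_two.subtype _
        have h1 : ∑' (k : ↑(↑(Finset.range K) : Set ℕ)ᶜ), f g x (k:ℕ)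
            ≤ ∑' (k : ↑(↑(Finset.range K) : Set ℕ)ᶜ), ((1:ℝ)/2)^(k:ℕ) :=
          hsub1.tsum_le_tsum (fun k => hfle g x k) hsub2
        have h2 : ∑ k ∈ Finset.range K, ((1:ℝ)/2)^k
              + ∑' (k : ↑(↑(Finset.range K) : Set ℕ)ᶜ), ((1:ℝ)/2)^(k:ℕ)
            = ∑' k : ℕ, ((1:ℝ)/2)^k := summable_geometric_two.sum_add_tsum_compl
        rw [tsum_geometric_two] at h2
        have h3 : ∑ k ∈ Finset.range K, ((1:ℝ)/2)^k = 2 * (1 - (1/2)^K) := by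
          rw [geom_sum_eq (by norm_num : (1:ℝ)/2 ≠ 1)]
          ring
        have h4 : ∑' (k : ↑(↑(Finset.range K) : Set ℕ)ᶜ), ((1:ℝ)/2)^(k:ℕ) = 2 * (1/2)^K := by
          rw [h3] at h2; linarith
        rw [h4] at h1
        calc ∑' (k : ↑(↑(Finset.range K) : Set ℕ)ᶜ), f g x (k:ℕ) ≤ 2 * (1/2)^K := h1
          _ ≤ ε / 4 := by nlinarith
      have hsplit : ∑ k ∈ Finset.range K, f g x k
            + ∑' (k : ↑(↑(Finset.range K) : Set ℕ)ᶜ), f g x (k:ℕ) = D g x := by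
        rw [hD]; exact (hsum g x).sum_add_tsum_compl
      have : D g x < ε/4 + ε/4 := by rw [← hsplit]; exact add_lt_add_of_lt_of_le hhead htail
      linarith
    refine ⟨Finset.univ.image (Function.invFun Φ), fun x => ?_⟩
    refine ⟨Function.invFun Φ (Φ x), Finset.mem_image_of_mem _ (Finset.mem_univ _), ?_⟩
    exact key _ _ (Function.invFun_eq ⟨x, rfl⟩)
  obtain ⟨G, hG⟩ := half
  set r : X → X := fun g => if h : ∃ a, a ∈ A ∧ D g a < ε/2 then h.choose else hA.choose with hr
  have hrA : ∀ g, r g ∈ A := by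
    intro g
    rw [hr]
    simp only []
    split
    · next h => exact h.choose_spec.1
    · exact hA.choose_spec
  refine ⟨G.image r, ?_, ?_⟩
  · intro a ha
    simp only [Finset.coe_image, Set.mem_image, Finset.mem_coe] at ha
    obtain ⟨g, _, rfl⟩ := ha
    exact hrA g
  · intro x hx
    obtain ⟨g, hgG, hgx⟩ := hG x
    have hex : ∃ a, a ∈ A ∧ D g a < ε/2 := ⟨x, hx, hgx⟩
    refine ⟨r g, Finset.mem_image_of_mem _ hgG, ?_⟩
    have hrg : D g (r g) < ε/2 := by
      rw [hr]; simp only [hex, dif_pos]; exact hex.choose_spec.2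
    calc D (r g) x ≤ D (r g) g + D g x := hDtri _ _ _
      _ = D g (r g) + D g x := by rw [hDcomm]
      _ < ε/2 + ε/2 := add_lt_add hrg hgx
      _ = ε := by ring

/-- If `X` is a separable metrizable space whose set of non-isolated points is
compact, then the Vietoris hyperspace `CL X` is a `γ`-space: it admits a
`g`-function `g : ℕ × CL X → opens` such that `{g n A : n}` is a neighborhood
base at each `A`, and for all `n, A` there is `m` with `B ∈ g m A` implying
`g m B ⊆ g n A`. -/
theorem hyperspace_gamma_space_of_separable_metrizable {X : Type*}
    [TopologicalSpace X] [SeparableSpace X] [MetrizableSpace X]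
    (hS : IsCompact {x : X | ¬IsOpen ({x} : Set X)}) :
    ∃ g : ℕ → CL X → Set (CL X),
      (∀ (n : ℕ) (A : CL X), IsOpen (g n A) ∧ A ∈ g n A) ∧
      (∀ (A : CL X) (S : Set (CL X)), IsOpen S → A ∈ S → ∃ n, g n A ⊆ S) ∧
      ∀ (n : ℕ) (A : CL X), ∃ m, ∀ B ∈ g m A, g m B ⊆ g n A := by
  classical
  rcases isEmpty_or_nonempty X with h | h
  · have hCL : IsEmpty (CL X) := ⟨fun A => A.2.1.elim fun x _ => h.false x⟩
    exact ⟨fun _ _ => ∅, fun n A => hCL.elim A, fun A => hCL.elim A, fun n A => hCL.elim A⟩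
  obtain ⟨D, hDself, hDnn, hDcomm, hDtri, hDcont, hcompat, hTB⟩ := exists_goodD X
  set S' : Set X := {x : X | ¬IsOpen ({x} : Set X)} with hS'def
  choose net hnet1 hnet2 using fun (n : ℕ) (A : CL X) =>
    hTB A.1 ((1/2)^n) (by positivity) A.2.1
  set ball : X → ℝ → Set X := fun a ε => {x | D a x < ε} with hballdef
  have hballopen : ∀ a ε, IsOpen (ball a ε) := fun a ε => isOpen_Iio.preimage (hDcont a)
  have hballself : ∀ a (ε : ℝ), 0 < ε → a ∈ ball a ε := by
    intro a ε hε; simp only [hballdef, mem_setOf_eq, hDself]; exact hε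
  set W : ℕ → CL X → Set X := fun n A => (⋃ a ∈ A.1 ∩ S', ball a ((1/2)^n)) ∪ (A.1 \ S')
    with hWdef
  have hWopen : ∀ n A, IsOpen (W n A) := by
    intro n A
    apply IsOpen.union
    · exact isOpen_biUnion fun a _ => hballopen _ _
    · have he : A.1 \ S' = ⋃ x ∈ A.1 \ S', ({x} : Set X) := by
        ext y; simp
      rw [he]
      exact isOpen_biUnion fun x hx => not_not.1 hx.2
  set g : ℕ → CL X → Set (CL X) := fun n A =>
    {B : CL X | B.1 ⊆ W n A ∧ ∀ a ∈ net n A, (B.1 ∩ ball a ((1/2)^n)).Nonempty} with hgdef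
  have hpow : ∀ {n n' : ℕ}, n ≤ n' → ((1:ℝ)/2)^n' ≤ (1/2)^n :=
    fun h => pow_le_pow_of_le_one (by norm_num) (by norm_num) h
  have hopen : ∀ n A, IsOpen (g n A) := by
    intro n A
    have he : g n A = {B : CL X | B.1 ⊆ W n A} ∩
        ⋂ a ∈ net n A, {B : CL X | (B.1 ∩ ball a ((1/2)^n)).Nonempty} := by
      ext B
      simp only [hgdef, mem_setOf_eq, mem_inter_iff, mem_iInter]
    rw [he]
    apply IsOpen.inter
    · exact .basic _ (Or.inl ⟨W n A, hWopen n A, rfl⟩)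
    · exact (net n A).finite_toSet.isOpen_biInter fun a _ =>
        .basic _ (Or.inr ⟨ball a ((1/2)^n), hballopen _ _, rfl⟩)
  have hmem : ∀ n A, A ∈ g n A := by
    intro n A
    constructor
    · intro x hx
      by_cases hxS : x ∈ S'
      · exact Or.inl (mem_biUnion ⟨hx, hxS⟩ (hballself x _ (by positivity)))
      · exact Or.inr ⟨hx, hxS⟩
    · intro a ha
      exact ⟨a, hnet1 n A (Finset.mem_coe.2 ha), hballself a _ (by positivity)⟩
  have hmono : ∀ n n' (A : CL X), n + 1 ≤ n' → g n' A ⊆ g n A := by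
    intro n n' A hn B hB
    have hr : 2 * ((1:ℝ)/2)^n' ≤ (1/2)^n := by
      have h1 : ((1:ℝ)/2)^n' ≤ (1/2)^(n+1) := hpow hn
      have h2 : ((1:ℝ)/2)^(n+1) = (1/2)^n * (1/2) := pow_succ _ _
      nlinarith [pow_pos (show (0:ℝ) < 1/2 by norm_num) n]
    constructor
    · intro b hb
      rcases hB.1 hb with hbu | hbd
      · obtain ⟨a, ha, hd⟩ := mem_iUnion₂.1 hbu
        refine Or.inl (mem_biUnion ha ?_)
        simp only [hballdef, mem_setOf_eq] at hd ⊢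
        have := hpow (show n ≤ n' by omega)
        linarith
      · exact Or.inr hbd
    · intro a ha
      have haA : a ∈ A.1 := hnet1 n A (Finset.mem_coe.2 ha)
      obtain ⟨a', ha', hd1⟩ := hnet2 n' A a haA
      obtain ⟨b, hbB, hd2⟩ := hB.2 a' ha'
      refine ⟨b, hbB, ?_⟩
      simp only [hballdef, mem_setOf_eq] at hd2 ⊢
      calc D a b ≤ D a a' + D a' b := hDtri _ _ _
        _ = D a' a + D a' b := by rw [hDcomm]
        _ < (1/2)^n' + (1/2)^n' := add_lt_add hd1 hd2
        _ ≤ (1/2)^n := by linarith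
  have hcpt : ∀ (K U : Set X), IsCompact K → IsOpen U → K ⊆ U →
      ∃ n : ℕ, ∀ x, (∃ a ∈ K, D a x < (1/2:ℝ)^n) → x ∈ U := by
    intro K U hK hU hKU
    set ρ : X → ℝ := fun a => if h : a ∈ U then (hcompat a U hU h).choose else 1 with hρdef
    have hρpos : ∀ a, 0 < ρ a := by
      intro a
      rw [hρdef]
      simp only []
      split
      · next hh => exact (hcompat a U hU hh).choose_spec.1
      · exact one_pos
    have hρspec : ∀ a (ha : a ∈ U), ∀ y, D a y < ρ a → y ∈ U := by
      intro a ha y hy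
      rw [hρdef] at hy
      simp only [dif_pos ha] at hy
      exact (hcompat a U hU ha).choose_spec.2 y hy
    obtain ⟨t, htK, hcov⟩ := hK.elim_nhds_subcover (fun a => ball a (ρ a / 2))
      (fun a _ => (hballopen a _).mem_nhds (hballself a _ (by linarith [hρpos a])))
    set nn : X → ℕ := fun a =>
      (exists_pow_lt_of_lt_one (by linarith [hρpos a] : (0:ℝ) < ρ a / 2)
        (by norm_num : (1:ℝ)/2 < 1)).choose with hnndef
    have hnn : ∀ a, ((1:ℝ)/2)^(nn a) < ρ a / 2 := fun a =>
      (exists_pow_lt_of_lt_one (by linarith [hρpos a]) (by norm_num)).choose_spec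
    refine ⟨t.sup nn, fun x ⟨a, haK, hax⟩ => ?_⟩
    obtain ⟨a₀, ha₀t, ha₀⟩ := mem_iUnion₂.1 (hcov haK)
    have haU : a₀ ∈ U := hKU (htK a₀ ha₀t)
    apply hρspec a₀ haU
    simp only [hballdef, mem_setOf_eq] at ha₀
    have h1 : ((1:ℝ)/2)^(t.sup nn) ≤ (1/2)^(nn a₀) := hpow (Finset.le_sup ha₀t)
    calc D a₀ x ≤ D a₀ a + D a x := hDtri _ _ _
      _ < ρ a₀ / 2 + (1/2)^(t.sup nn) := add_lt_add ha₀ hax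
      _ ≤ ρ a₀ / 2 + ρ a₀ / 2 := by linarith [hnn a₀]
      _ = ρ a₀ := by ring
  have hS'c : IsClosed S' := by
    rw [← isOpen_compl_iff]
    have he : S'ᶜ = ⋃ x ∈ S'ᶜ, ({x} : Set X) := by ext y; simp
    rw [he]
    exact isOpen_biUnion fun x hx => not_not.1 hx
  have hbase : ∀ (A : CL X) (T : Set (CL X)), IsOpen T → A ∈ T → ∃ n, g n A ⊆ T := by
    intro A T hT
    have hT' : TopologicalSpace.GenerateOpen
        ({S | ∃ U : Set X, IsOpen U ∧ S = {K : CL X | K.1 ⊆ U}} ∪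
         {S | ∃ U : Set X, IsOpen U ∧ S = {K : CL X | (K.1 ∩ U).Nonempty}}) T := hT
    clear hT
    induction hT' with
    | basic s hs =>
      rcases hs with ⟨U, hU, rfl⟩ | ⟨U, hU, rfl⟩
      · intro hA
        have hAU : A.1 ⊆ U := hA
        have hKc : IsCompact (A.1 ∩ S') :=
          hS.of_isClosed_subset (A.2.2.inter hS'c) inter_subset_right
        obtain ⟨n, hn⟩ := hcpt (A.1 ∩ S') U hKc hU (inter_subset_left.trans hAU)
        refine ⟨n, fun B hB => ?_⟩
        intro b hb
        rcases hB.1 hb with hbu | hbd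
        · obtain ⟨a, ha, hd⟩ := mem_iUnion₂.1 hbu
          exact hn b ⟨a, ha, hd⟩
        · exact hAU hbd.1
      · rintro ⟨a₀, ha₀A, ha₀U⟩
        obtain ⟨ρ, hρpos, hρ⟩ := hcompat a₀ U hU ha₀U
        obtain ⟨n, hn⟩ := exists_pow_lt_of_lt_one (show (0:ℝ) < ρ/2 by linarith)
          (show (1:ℝ)/2 < 1 by norm_num)
        refine ⟨n, fun B hB => ?_⟩
        obtain ⟨a, hat, hd1⟩ := hnet2 n A a₀ ha₀A
        obtain ⟨b, hbB, hd2⟩ := hB.2 a hat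
        refine ⟨b, hbB, hρ b ?_⟩
        simp only [hballdef, mem_setOf_eq] at hd2
        calc D a₀ b ≤ D a₀ a + D a b := hDtri _ _ _
          _ = D a a₀ + D a b := by rw [hDcomm]
          _ < (1/2)^n + (1/2)^n := add_lt_add hd1 hd2
          _ < ρ := by linarith
    | univ => exact fun _ => ⟨0, fun B _ => trivial⟩
    | inter s t _ _ ihs iht =>
      intro hA
      obtain ⟨n1, h1⟩ := ihs hA.1
      obtain ⟨n2, h2⟩ := iht hA.2
      exact ⟨max n1 n2 + 1, fun B hB =>
        ⟨h1 (hmono n1 _ A (by omega) hB), h2 (hmono n2 _ A (by omega) hB)⟩⟩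
    | sUnion ts _ ih =>
      rintro ⟨t, htts, hAt⟩
      obtain ⟨n, hn⟩ := ih t htts hAt
      exact ⟨n, fun B hB => ⟨t, htts, hn hB⟩⟩
  refine ⟨g, fun n A => ⟨hopen n A, hmem n A⟩, hbase, ?_⟩
  intro n A
  refine ⟨n + 2, fun B hB C hC => ?_⟩
  have hr4 : 4 * ((1:ℝ)/2)^(n+2) = (1/2)^n := by
    rw [pow_succ, pow_succ]; ring
  have hr2 : 2 * ((1:ℝ)/2)^(n+2) ≤ (1/2)^n := by
    nlinarith [pow_pos (show (0:ℝ) < 1/2 by norm_num) (n+2)]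
  constructor
  · intro c hc
    rcases hC.1 hc with hcu | hcd
    · obtain ⟨b, hb, hdb⟩ := mem_iUnion₂.1 hcu
      simp only [hballdef, mem_setOf_eq] at hdb
      rcases hB.1 hb.1 with h2 | h2
      · obtain ⟨a, ha, hda⟩ := mem_iUnion₂.1 h2
        simp only [hballdef, mem_setOf_eq] at hda
        refine Or.inl (mem_biUnion ha ?_)
        simp only [hballdef, mem_setOf_eq]
        calc D a c ≤ D a b + D b c := hDtri _ _ _
          _ < (1/2)^(n+2) + (1/2)^(n+2) := add_lt_add hda hdb
          _ ≤ (1/2)^n := by linarith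
      · exact absurd hb.2 h2.2
    · rcases hB.1 hcd.1 with h2 | h2
      · obtain ⟨a, ha, hda⟩ := mem_iUnion₂.1 h2
        simp only [hballdef, mem_setOf_eq] at hda
        refine Or.inl (mem_biUnion ha ?_)
        simp only [hballdef, mem_setOf_eq]
        have := hpow (show n ≤ n + 2 by omega)
        linarith
      · exact Or.inr ⟨h2.1, hcd.2⟩
  · intro a ha
    have haA : a ∈ A.1 := hnet1 n A (Finset.mem_coe.2 ha)
    obtain ⟨a', ha', hd1⟩ := hnet2 (n+2) A a haA
    obtain ⟨b, hbB, hd2⟩ := hB.2 a' ha'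
    simp only [hballdef, mem_setOf_eq] at hd2
    obtain ⟨b', hb', hd3⟩ := hnet2 (n+2) B b hbB
    obtain ⟨c, hcC, hd4⟩ := hC.2 b' hb'
    simp only [hballdef, mem_setOf_eq] at hd4
    refine ⟨c, hcC, ?_⟩
    simp only [hballdef, mem_setOf_eq]
    calc D a c ≤ D a a' + D a' c := hDtri _ _ _
      _ ≤ D a a' + (D a' b + D b c) := by linarith [hDtri a' b c]
      _ ≤ D a a' + (D a' b + (D b b' + D b' c)) := by linarith [hDtri b b' c]
      _ = D a' a + D a' b + D b' b + D b' c := by rw [hDcomm a a', hDcomm b b']; ring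
      _ < (1/2)^(n+2) + (1/2)^(n+2) + (1/2)^(n+2) + (1/2)^(n+2) := by
          have h4 := add_lt_add (add_lt_add (add_lt_add hd1 hd2) hd3) hd4
          linarith
      _ = (1/2)^n := by linarith
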